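/- Let p be an odd prime and n, k positive integers such that n/gcd(n,k) is odd and p^n ≡ 1 (mod 4), and set d = (p^n−1)/2 + p^k + 1. Then the power function f(x)=x^d on F_{p^n} satisfies _{−1}Δ_f ≤ 6: for all a, b ∈ F_{p^n}, the equation (x+a)^d + x^d = b has at most 6 solutions x ∈ F_{p^n}. -/

import Mathlib

-- aux 1: monoid lemma
lemma aux_pow_mul {M : Type*} [Monoid M] {p m : ℕ} {w : M} (h : w ^ p ^ m = w) :
    ∀ q : ℕ, w ^ p ^ (m * q) = w := by
  intro q
  induction q with
  | zero => simp
  | succ q ih =>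
    have : p ^ (m * (q+1)) = p ^ (m*q) * p ^ m := by ring
    rw [this, pow_mul, ih, h]

lemma aux_pow_gcd {M : Type*} [Monoid M] (p : ℕ) (w : M) :
    ∀ a b : ℕ, w ^ p ^ a = w → w ^ p ^ b = w → w ^ p ^ (Nat.gcd a b) = w := by
  intro a b
  induction a, b using Nat.gcd.induction with
  | H0 b => intro _ hb; simpa using hb
  | H1 a b ha ih =>
    intro h1 h2
    rw [Nat.gcd_rec]
    apply ih _ h1
    have hdiv : b = a * (b / a) + b % a := (Nat.div_add_mod b a).symm
    have : w ^ p ^ b = (w ^ p ^ (a * (b/a))) ^ p ^ (b % a) := by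
      rw [← pow_mul, ← pow_add, ← hdiv]
    rw [this, aux_pow_mul h1] at h2
    exact h2

lemma aux_gcd_two_mul {n k : ℕ} (hn : 0 < n) (hk : 0 < k) (hquot : Odd (n / Nat.gcd n k)) :
    Nat.gcd n (2 * k) = Nat.gcd n k := by
  set e := Nat.gcd n k with he
  have he0 : 0 < e := Nat.gcd_pos_of_pos_left _ hn
  have h1 : e ∣ Nat.gcd n (2 * k) :=
    Nat.dvd_gcd (Nat.gcd_dvd_left _ _) ((Nat.gcd_dvd_right n k).trans (dvd_mul_left k 2))
  have h2 : Nat.gcd n (2 * k) ∣ 2 * e := by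
    have : Nat.gcd n (2 * k) ∣ Nat.gcd (2 * n) (2 * k) :=
      Nat.dvd_gcd ((Nat.gcd_dvd_left _ _).trans (dvd_mul_left n 2)) (Nat.gcd_dvd_right _ _)
    rwa [Nat.gcd_mul_left] at this
  obtain ⟨t, ht⟩ := h1
  have ht2 : t ∣ 2 := by
    have := h2
    rw [ht, mul_comm 2 e] at this
    exact (Nat.mul_dvd_mul_iff_left he0).mp this
  rcases (Nat.le_of_dvd (by norm_num) ht2).lt_or_eq with h | h
  · interval_cases t
    · omega
    · rw [ht, mul_one]
  · subst h
    exfalso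
    have hdvd : e * 2 ∣ n := by rw [← ht]; exact Nat.gcd_dvd_left _ _
    obtain ⟨m, hm⟩ := hdvd
    have : n / e = 2 * m := by
      rw [hm, mul_assoc, Nat.mul_div_cancel_left _ he0]
    rw [this] at hquot
    exact (Nat.not_odd_iff_even.mpr ⟨m, by ring⟩) hquot

section Field
variable {F : Type*} [Field F] [Fintype F] {p n k : ℕ}

lemma aux_charF (hp : p.Prime) (hn0 : 0 < n) (hcard : Fintype.card F = p ^ n) :
    CharP F p := by
  obtain ⟨m, hr, hc⟩ := FiniteField.card F (ringChar F)
  have hpn : p ^ n = (ringChar F) ^ (m : ℕ) := by rw [← hcard, hc]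
  have hpd : p ∣ (ringChar F) ^ (m : ℕ) := by
    rw [← hpn]; exact dvd_pow_self p hn0.ne'
  have : p = ringChar F := (Nat.prime_dvd_prime_iff_eq hp hr).mp (hp.dvd_of_dvd_pow hpd)
  exact this ▸ ringChar.charP F

lemma aux_two_ne (hp : p.Prime) (hodd : Odd p) (hn0 : 0 < n)
    (hcard : Fintype.card F = p ^ n) : (2 : F) ≠ 0 := by
  haveI := aux_charF hp hn0 hcard
  intro h
  have := (CharP.cast_eq_zero_iff F p 2).mp (by exact_mod_cast h)
  have hp2 : p = 2 := ((Nat.prime_dvd_prime_iff_eq hp Nat.prime_two).mp this)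
  rw [hp2] at hodd
  exact (Nat.not_odd_iff_even.mpr (by norm_num)) hodd

lemma aux_fix (hp : p.Prime) (hodd : Odd p) (hn0 : 0 < n) (hk0 : 0 < k)
    (hquot : Odd (n / Nat.gcd n k)) (hcard : Fintype.card F = p ^ n)
    {w : F} (h2k : w ^ p ^ (2 * k) = w) : w ^ p ^ k = w := by
  have hn : w ^ p ^ n = w := by rw [← hcard]; exact FiniteField.pow_card w
  have hg : w ^ p ^ (Nat.gcd n k) = w := by
    have := aux_pow_gcd p w n (2 * k) hn h2k
    rwa [aux_gcd_two_mul hn0 hk0 hquot] at this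
  obtain ⟨t, ht⟩ := Nat.gcd_dvd_right n k
  rw [ht]
  exact aux_pow_mul hg t

lemma aux_keyA (hp : p.Prime) (hodd : Odd p) (hn0 : 0 < n) (hk0 : 0 < k)
    (hquot : Odd (n / Nat.gcd n k)) (hcard : Fintype.card F = p ^ n)
    {w : F} (hw : w ^ p ^ k = -w) : w = 0 := by
  have hpk_odd : Odd (p ^ k) := hodd.pow
  have h2k : w ^ p ^ (2 * k) = w := by
    have h : p ^ (2 * k) = p ^ k * p ^ k := by ring
    rw [h, pow_mul, hw, hpk_odd.neg_pow, hw, neg_neg]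
  have := aux_fix hp hodd hn0 hk0 hquot hcard h2k
  rw [this] at hw
  have h2 := aux_two_ne hp hodd hn0 hcard
  have : (2 : F) * w = 0 := by linear_combination hw
  rcases mul_eq_zero.mp this with h | h
  · exact absurd h h2
  · exact h

lemma aux_keyB (hp : p.Prime) (hodd : Odd p) (hn0 : 0 < n) (hk0 : 0 < k)
    (hquot : Odd (n / Nat.gcd n k)) (hcard : Fintype.card F = p ^ n)
    {u : F} (hu : u ^ p ^ k * u = 1) : u = 1 ∨ u = -1 := by
  have hu0 : u ≠ 0 := by
    intro h; rw [h] at hu; simp at hu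
  have hupk : u ^ p ^ k = u⁻¹ := eq_inv_of_mul_eq_one_left hu
  have h2k : u ^ p ^ (2 * k) = u := by
    have h : p ^ (2 * k) = p ^ k * p ^ k := by ring
    rw [h, pow_mul, hupk, inv_pow, hupk, inv_inv]
  have hfix := aux_fix hp hodd hn0 hk0 hquot hcard h2k
  rw [hfix] at hu
  rcases mul_self_eq_one_iff.mp hu with h | h
  · exact Or.inl h
  · exact Or.inr h

lemma aux_fiber (hp : p.Prime) (hodd : Odd p) (hn0 : 0 < n) (hk0 : 0 < k)
    (hquot : Odd (n / Nat.gcd n k)) (hcard : Fintype.card F = p ^ n)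
    (c : F) : {y : F | y ^ p ^ k * y = c}.ncard ≤ 2 := by
  rcases Set.eq_empty_or_nonempty {y : F | y ^ p ^ k * y = c} with h | ⟨y₀, hy₀⟩
  · rw [h]; simp
  · have hsub : {y : F | y ^ p ^ k * y = c} ⊆ {y₀, -y₀} := by
      intro y hy
      simp only [Set.mem_setOf_eq] at hy hy₀
      by_cases hc : c = 0
      · have hy' : y = 0 := by
          rcases mul_eq_zero.mp (hy.trans hc) with h | h
          · exact pow_eq_zero_iff (pow_pos hp.pos k).ne' |>.mp h
          · exact h
        have hy₀' : y₀ = 0 := by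
          rcases mul_eq_zero.mp (hy₀.trans hc) with h | h
          · exact pow_eq_zero_iff (pow_pos hp.pos k).ne' |>.mp h
          · exact h
        left; rw [hy', hy₀']
      · have hy0 : y ≠ 0 := by
          intro h; rw [h, mul_zero] at hy; exact hc hy.symm
        have hy₀0 : y₀ ≠ 0 := by
          intro h; rw [h, mul_zero] at hy₀; exact hc hy₀.symm
        have hu : (y * y₀⁻¹) ^ p ^ k * (y * y₀⁻¹) = 1 := by
          have expand : (y * y₀⁻¹) ^ p ^ k * (y * y₀⁻¹)
              = (y ^ p ^ k * y) * (y₀ ^ p ^ k * y₀)⁻¹ := by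
            field_simp
            rw [div_pow, div_mul_cancel₀ _ (pow_ne_zero _ hy₀0)]
          rw [expand, hy, hy₀, mul_inv_cancel₀ hc]
        rcases aux_keyB hp hodd hn0 hk0 hquot hcard hu with h | h
        · left
          field_simp at h
          exact h
        · right
          field_simp at h
          simp [h]
    calc _ ≤ ({y₀, -y₀} : Set F).ncard := Set.ncard_le_ncard hsub (Set.toFinite _)
      _ ≤ _ := by
        apply (Set.ncard_insert_le _ _).trans
        simp

end Field

lemma aux_ncard_le_one {α : Type*} (s : Set α) (h : ∀ x ∈ s, ∀ y ∈ s, x = y) :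
    s.ncard ≤ 1 := by
  rcases Set.eq_empty_or_nonempty s with h' | ⟨x, hx⟩
  · simp [h']
  · have hsub : s ⊆ {x} := fun y hy => by
      rw [Set.mem_singleton_iff]; exact h y hy x hx
    exact (Set.ncard_le_ncard hsub (Set.toFinite _)).trans (by simp)

lemma aux_union4 {α : Type*} (A B C D : Set α) :
    (A ∪ B ∪ C ∪ D).ncard ≤ A.ncard + B.ncard + C.ncard + D.ncard := by
  calc (A ∪ B ∪ C ∪ D).ncard ≤ (A ∪ B ∪ C).ncard + D.ncard := Set.ncard_union_le _ _
    _ ≤ ((A ∪ B).ncard + C.ncard) + D.ncard :=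
        add_le_add_left (Set.ncard_union_le _ _) _
    _ ≤ ((A.ncard + B.ncard) + C.ncard) + D.ncard :=
        add_le_add_left (add_le_add_left (Set.ncard_union_le _ _) _) _

lemma aux_union5 {α : Type*} (A B C D E : Set α) :
    (A ∪ B ∪ C ∪ D ∪ E).ncard ≤ A.ncard + B.ncard + C.ncard + D.ncard + E.ncard := by
  calc (A ∪ B ∪ C ∪ D ∪ E).ncard ≤ (A ∪ B ∪ C ∪ D).ncard + E.ncard := Set.ncard_union_le _ _
    _ ≤ A.ncard + B.ncard + C.ncard + D.ncard + E.ncard :=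
        add_le_add_left (aux_union4 _ _ _ _) _

/-- Theorem 3.6 (Theorem `thme`), case `p^n ≡ 1 (mod 4)`, `c = -1`: for
`d = (p^n-1)/2 + p^k + 1` with `n/gcd(n,k)` odd, one has `₋₁Δ_f ≤ 6`. -/
theorem stmt_15 (p n k : ℕ) (hp : p.Prime) (hodd : Odd p)
    (hn0 : 0 < n) (hk0 : 0 < k) (hquot : Odd (n / Nat.gcd n k))
    (hmod : p ^ n % 4 = 1) (d : ℕ) (hd : d = (p ^ n - 1) / 2 + p ^ k + 1)
    (F : Type*) [Field F] [Fintype F] (hcard : Fintype.card F = p ^ n)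
    (a b : F) :
    {x : F | (x + a) ^ d + x ^ d = b}.ncard ≤ 6 := by
  haveI hchar : CharP F p := aux_charF hp hn0 hcard
  haveI : Fact p.Prime := ⟨hp⟩
  have h2 : (2 : F) ≠ 0 := aux_two_ne hp hodd hn0 hcard
  set e1 := (p ^ n - 1) / 2 with he1
  set S := {x : F | (x + a) ^ d + x ^ d = b} with hS
  have hq1 : 1 ≤ p ^ n := Nat.one_le_pow _ _ hp.pos
  have h4 : 4 ∣ p ^ n - 1 := by omega
  have he1_two : 2 * e1 = p ^ n - 1 := by omega
  have he1_even : Even e1 := by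
    obtain ⟨m, hm⟩ := h4
    have : e1 = 2 * m := by omega
    exact ⟨m, by omega⟩
  have hfrob : ∀ x y : F, (x + y) ^ p ^ k = x ^ p ^ k + y ^ p ^ k := fun x y =>
    add_pow_char_pow x y p k
  have h2frob : (2 : F) ^ p ^ k = 2 := by
    have := hfrob 1 1
    norm_num at this
    exact this
  have hpk_odd : Odd (p ^ k) := hodd.pow
  have hη_pm : ∀ x : F, x ≠ 0 → x ^ e1 = 1 ∨ x ^ e1 = -1 := by
    intro x hx
    have hsq : x ^ e1 * x ^ e1 = 1 := by
      rw [← pow_add]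
      have he : e1 + e1 = p ^ n - 1 := by omega
      rw [he, ← hcard]
      exact FiniteField.pow_card_sub_one_eq_one x hx
    exact mul_self_eq_one_iff.mp hsq
  have hd_eq : ∀ x : F, x ^ d = x ^ e1 * (x ^ p ^ k * x) := by
    intro x
    rw [hd, pow_add, pow_add, pow_one, mul_assoc]
  have hη_neg : ∀ x : F, (-x) ^ e1 = x ^ e1 := fun x => he1_even.neg_pow x
  have hd0 : d ≠ 0 := by omega
  -- class sets
  set C : F → F → Set F := fun ε₁ ε₂ =>
    {x : F | x ≠ 0 ∧ x + a ≠ 0 ∧ (x + a) ^ e1 = ε₁ ∧ x ^ e1 = ε₂ ∧ (x + a) ^ d + x ^ d = b}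
    with hC
  by_cases ha : a = 0
  · -- degenerate case a = 0
    subst ha
    have hsub : S ⊆ ({0} : Set F) ∪ {y : F | y ^ p ^ k * y = b * 2⁻¹}
        ∪ {y : F | y ^ p ^ k * y = -(b * 2⁻¹)} := by
      intro x hx
      simp only [hS, Set.mem_setOf_eq, add_zero] at hx
      by_cases hx0 : x = 0
      · exact Or.inl (Or.inl hx0)
      · rw [hd_eq x] at hx
        rcases hη_pm x hx0 with hη | hη
        · left; right
          rw [hη, one_mul] at hx
          simp only [Set.mem_setOf_eq]
          field_simp
          linear_combination hx
        · right
          rw [hη] at hx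
          simp only [Set.mem_setOf_eq]
          field_simp
          linear_combination -hx
    calc S.ncard ≤ _ := Set.ncard_le_ncard hsub (Set.toFinite _)
      _ ≤ ({0} : Set F).ncard + ({y : F | y ^ p ^ k * y = b * 2⁻¹}).ncard
          + ({y : F | y ^ p ^ k * y = -(b * 2⁻¹)}).ncard := by
          refine (Set.ncard_union_le _ _).trans ?_
          exact add_le_add_left (Set.ncard_union_le _ _) _
      _ ≤ 1 + 2 + 2 := by
          gcongr
          · simp
          · exact aux_fiber hp hodd hn0 hk0 hquot hcard _
          · exact aux_fiber hp hodd hn0 hk0 hquot hcard _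
      _ ≤ 6 := by norm_num
  · -- main case a ≠ 0
    -- mixed classes are subsingletons
    have hmixed : ∀ ε : F, ε * ε = 1 → ∀ x ∈ C ε (-ε), ∀ x' ∈ C ε (-ε), x = x' := by
      intro ε hε x hx x' hx'
      have hε0 : ε ≠ 0 := by
        intro h; rw [h, mul_zero] at hε; exact zero_ne_one hε
      obtain ⟨hx0, hxa, hηx1, hηx2, hxe⟩ := hx
      obtain ⟨hx0', hxa', hηx1', hηx2', hxe'⟩ := hx'
      have heq : ε * (a * x ^ p ^ k + a ^ p ^ k * x + a ^ p ^ k * a) = b := by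
        rw [hd_eq (x + a), hd_eq x, hηx1, hηx2, hfrob x a] at hxe
        linear_combination hxe
      have heq' : ε * (a * x' ^ p ^ k + a ^ p ^ k * x' + a ^ p ^ k * a) = b := by
        rw [hd_eq (x' + a), hd_eq x', hηx1', hηx2', hfrob x' a] at hxe'
        linear_combination hxe'
      have hδ : a * x ^ p ^ k + a ^ p ^ k * x = a * x' ^ p ^ k + a ^ p ^ k * x' := by
        have h := heq.trans heq'.symm
        have h2' := mul_left_cancel₀ hε0 h
        linear_combination h2'
      have hsubp : a * (x - x') ^ p ^ k = -(a ^ p ^ k * (x - x')) := by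
        rw [sub_pow_char_pow]
        linear_combination hδ
      have hw : ((x - x') * a⁻¹) ^ p ^ k = -((x - x') * a⁻¹) := by
        have hapk : a ^ p ^ k ≠ 0 := pow_ne_zero _ ha
        rw [mul_pow, inv_pow]
        field_simp
        linear_combination hsubp
      have hz := aux_keyA hp hodd hn0 hk0 hquot hcard hw
      rcases mul_eq_zero.mp hz with h | h
      · exact sub_eq_zero.mp h
      · exact absurd h (inv_ne_zero ha)
    have hmixed_card : ∀ ε : F, ε * ε = 1 → (C ε (-ε)).ncard ≤ 1 := fun ε hε =>
      aux_ncard_le_one _ (hmixed ε hε)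
    -- pure classes: key equation
    have hpure : ∀ ε : F, ε * ε = 1 → ∀ x ∈ C ε ε,
        (2 * x + a) ^ p ^ k * (2 * x + a) = 2 * ε * b - a ^ p ^ k * a := by
      intro ε hε x hx
      obtain ⟨hx0, hxa, hηx1, hηx2, hxe⟩ := hx
      rw [hd_eq (x + a), hd_eq x, hηx1, hηx2, hfrob x a] at hxe
      have h' : (x ^ p ^ k + a ^ p ^ k) * (x + a) + x ^ p ^ k * x = ε * b := by
        linear_combination ε * hxe - ((x ^ p ^ k + a ^ p ^ k) * (x + a) + x ^ p ^ k * x) * hε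
      rw [hfrob (2 * x) a, mul_pow, h2frob]
      linear_combination 2 * h'
    have hpure_card : ∀ ε : F, ε * ε = 1 → (C ε ε).ncard ≤ 2 := by
      intro ε hε
      have hinj : Set.InjOn (fun x => 2 * x + a) (C ε ε) := by
        intro x _ x' _ h
        simp only at h
        have h2x : (2 : F) * x = 2 * x' := by linear_combination h
        exact mul_left_cancel₀ h2 h2x
      have himg : (fun x => 2 * x + a) '' (C ε ε)
          ⊆ {y : F | y ^ p ^ k * y = 2 * ε * b - a ^ p ^ k * a} := by
        rintro _ ⟨x, hx, rfl⟩
        exact hpure ε hε x hx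
      calc (C ε ε).ncard = ((fun x => 2 * x + a) '' (C ε ε)).ncard :=
            (Set.ncard_image_of_injOn hinj).symm
        _ ≤ _ := Set.ncard_le_ncard himg (Set.toFinite _)
        _ ≤ 2 := aux_fiber hp hodd hn0 hk0 hquot hcard _
    -- covers
    have hcover4 : ∀ x ∈ S, x ≠ 0 → x + a ≠ 0 →
        x ∈ C 1 1 ∪ C 1 (-1) ∪ C (-1) 1 ∪ C (-1) (-1) := by
      intro x hx hx0 hxa
      simp only [hS, Set.mem_setOf_eq] at hx
      rcases hη_pm (x + a) hxa with h1 | h1 <;> rcases hη_pm x hx0 with h2' | h2'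
      · exact Or.inl (Or.inl (Or.inl ⟨hx0, hxa, h1, h2', hx⟩))
      · exact Or.inl (Or.inl (Or.inr ⟨hx0, hxa, h1, h2', hx⟩))
      · exact Or.inl (Or.inr ⟨hx0, hxa, h1, h2', hx⟩)
      · exact Or.inr ⟨hx0, hxa, h1, h2', hx⟩
    -- refinement: if 0 or -a is a solution then the class C (a^e1) (a^e1) is empty
    have hεa2 : a ^ e1 * a ^ e1 = 1 := by
      rcases hη_pm a ha with h | h <;> rw [h] <;> norm_num
    have hrefine : ((0 : F) ∈ S ∨ (-a) ∈ S) → C (a ^ e1) (a ^ e1) = ∅ := by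
      intro h0
      have hb : b = a ^ e1 * (a ^ p ^ k * a) := by
        rcases h0 with h | h
        · simp only [hS, Set.mem_setOf_eq, zero_add] at h
          rw [zero_pow hd0, add_zero, hd_eq a] at h
          exact h.symm
        · simp only [hS, Set.mem_setOf_eq, neg_add_cancel] at h
          rw [zero_pow hd0, zero_add, hd_eq (-a), hη_neg a, hpk_odd.neg_pow] at h
          rw [← h]
          ring
      ext x
      simp only [Set.mem_empty_iff_false, iff_false]
      intro hx
      have hx0 := hx.1
      have hxa := hx.2.1
      have hyeq := hpure (a ^ e1) hεa2 x hx
      rw [hb] at hyeq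
      have hy' : (2 * x + a) ^ p ^ k * (2 * x + a) = a ^ p ^ k * a := by
        linear_combination hyeq + 2 * (a ^ p ^ k * a) * hεa2
      have hu : ((2 * x + a) * a⁻¹) ^ p ^ k * ((2 * x + a) * a⁻¹) = 1 := by
        have hapk : a ^ p ^ k ≠ 0 := pow_ne_zero _ ha
        rw [mul_pow, inv_pow]
        field_simp
        linear_combination hy'
      rcases aux_keyB hp hodd hn0 hk0 hquot hcard hu with h | h
      · apply hx0
        have h'' : (2 * x + a) * a⁻¹ = a * a⁻¹ := h.trans (mul_inv_cancel₀ ha).symm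
        have h' := mul_right_cancel₀ (inv_ne_zero ha) h''
        have hx2 : (2 : F) * x = 0 := by linear_combination h'
        rcases mul_eq_zero.mp hx2 with h' | h'
        · exact absurd h' h2
        · exact h'
      · apply hxa
        have hma : (-a) * a⁻¹ = -1 := by rw [neg_mul, mul_inv_cancel₀ ha]
        have h'' : (2 * x + a) * a⁻¹ = (-a) * a⁻¹ := h.trans hma.symm
        have h' := mul_right_cancel₀ (inv_ne_zero ha) h''
        have hx2 : (2 : F) * (x + a) = 0 := by linear_combination h'
        rcases mul_eq_zero.mp hx2 with h' | h'
        · exact absurd h' h2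
        · exact h'
    -- final count
    have hone : (1 : F) * 1 = 1 := by norm_num
    have hmone : (-1 : F) * (-1) = 1 := by norm_num
    have hc11 := hpure_card 1 hone
    have hcmm := hpure_card (-1) hmone
    have hc1m := hmixed_card 1 hone
    have hcm1' := hmixed_card (-1) hmone
    have hcm1 : (C (-1) 1).ncard ≤ 1 := by
      have hnn : -(-1 : F) = 1 := neg_neg 1
      rwa [hnn] at hcm1'
    by_cases h0 : (0 : F) ∈ S ∨ (-a) ∈ S
    · have hempty := hrefine h0
      have hcover5 : S ⊆ ({0, -a} : Set F) ∪ C 1 1 ∪ C 1 (-1) ∪ C (-1) 1 ∪ C (-1) (-1) := by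
        intro x hx
        by_cases hx0 : x = 0
        · exact Or.inl (Or.inl (Or.inl (Or.inl (Or.inl hx0))))
        · by_cases hxa : x + a = 0
          · exact Or.inl (Or.inl (Or.inl (Or.inl (Or.inr (by
              simp only [Set.mem_singleton_iff]
              linear_combination hxa)))))
          · rcases hcover4 x hx hx0 hxa with h | h
            · rcases h with h | h
              · rcases h with h | h
                · exact Or.inl (Or.inl (Or.inl (Or.inr h)))
                · exact Or.inl (Or.inl (Or.inr h))
              · exact Or.inl (Or.inr h)
            · exact Or.inr h
      have hZ : ({0, -a} : Set F).ncard ≤ 2 :=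
        (Set.ncard_insert_le _ _).trans (by simp)
      rcases hη_pm a ha with hεa | hεa <;> rw [hεa] at hempty
      · have hc11' : (C 1 1).ncard = 0 := by rw [hempty]; simp
        calc S.ncard ≤ _ := Set.ncard_le_ncard hcover5 (Set.toFinite _)
          _ ≤ _ := aux_union5 _ _ _ _ _
          _ ≤ 2 + 0 + 1 + 1 + 2 := by
              gcongr <;> simp [hZ, hc11'.le, hc1m, hcm1, hcmm]
          _ ≤ 6 := by norm_num
      · have hcmm' : (C (-1) (-1)).ncard = 0 := by rw [hempty]; simp
        calc S.ncard ≤ _ := Set.ncard_le_ncard hcover5 (Set.toFinite _)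
          _ ≤ _ := aux_union5 _ _ _ _ _
          _ ≤ 2 + 2 + 1 + 1 + 0 := by
              gcongr <;> simp [hZ, hc11, hc1m, hcm1, hcmm'.le]
          _ ≤ 6 := by norm_num
    · push_neg at h0
      have hcover : S ⊆ C 1 1 ∪ C 1 (-1) ∪ C (-1) 1 ∪ C (-1) (-1) := by
        intro x hx
        have hx0 : x ≠ 0 := by
          intro h; rw [h] at hx; exact h0.1 hx
        have hxa : x + a ≠ 0 := by
          intro h
          have hxna : x = -a := by linear_combination h
          rw [hxna] at hx
          exact h0.2 hx
        exact hcover4 x hx hx0 hxa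
      calc S.ncard ≤ _ := Set.ncard_le_ncard hcover (Set.toFinite _)
        _ ≤ _ := aux_union4 _ _ _ _
        _ ≤ 2 + 1 + 1 + 2 := by gcongr <;> simp [hc11, hc1m, hcm1, hcmm]
        _ ≤ 6 := by norm_num
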